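/- Let Q be a smooth manifold, ϑ a closed one-form on Q, θ := π_Q*ϑ its pullback to T*Q, and Ω_θ := −dΘ_Q + θ∧Θ_Q the associated almost symplectic two-form on T*Q. Let h be a smooth function on T*Q and X_h the vector field defined by ι_{X_h}Ω_θ = d_θh, where d_θβ := dβ − θ∧β. Let γ be a one-form on Q satisfying d_ϑγ := dγ − ϑ∧γ = 0 (so that the image of γ is a Lagrangian submanifold of (T*Q, Ω_θ)), and set X_h^γ := Tπ_Q ∘ X_h ∘ γ. Then the following are equivalent: (1) X_h and X_h^γ are γ-related, i.e. Tγ ∘ X_h^γ = X_h ∘ γ; (2) d_ϑ(h ∘ γ) = 0. -/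

import Mathlib

noncomputable section

open scoped BigOperators

variable {E F : Type*} [NormedAddCommGroup E] [NormedSpace ℝ E]
  [NormedAddCommGroup F] [NormedSpace ℝ F]

/-- The exterior derivative of a smooth function, as a one-form. -/
def extDer0 (f : E → ℝ) : E → E → ℝ := fun x v => fderiv ℝ f x v

/-- The exterior derivative of a one-form. -/
def extDer1 (α : E → E → ℝ) : E → E → E → ℝ := fun x u v =>
  fderiv ℝ (fun y => α y v) x u - fderiv ℝ (fun y => α y u) x v

/-- The exterior derivative of a two-form. -/
def extDer2 (ω : E → E → E → ℝ) : E → E → E → E → ℝ := fun x u v w =>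
  fderiv ℝ (fun y => ω y v w) x u - fderiv ℝ (fun y => ω y u w) x v +
    fderiv ℝ (fun y => ω y u v) x w

/-- Wedge product of two one-forms. -/
def wedge11 (α β : E → E → ℝ) : E → E → E → ℝ := fun x u v =>
  α x u * β x v - α x v * β x u

/-- Wedge product of a one-form with a two-form. -/
def wedge12 (θ : E → E → ℝ) (ω : E → E → E → ℝ) : E → E → E → E → ℝ := fun x u v w =>
  θ x u * ω x v w - θ x v * ω x u w + θ x w * ω x u v

/-- Pullback of a one-form along a smooth map. -/
def pb1 (φ : E → F) (α : F → F → ℝ) : E → E → ℝ := fun x v => α (φ x) (fderiv ℝ φ x v)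

/-- Pullback of a two-form along a smooth map. -/
def pb2 (φ : E → F) (ω : F → F → F → ℝ) : E → E → E → ℝ := fun x u v =>
  ω (φ x) (fderiv ℝ φ x u) (fderiv ℝ φ x v)

/-- Model for the cotangent bundle `T*Q` of the manifold `Q = E`. -/
abbrev Cot (E : Type*) [NormedAddCommGroup E] [NormedSpace ℝ E] := E × (E →L[ℝ] ℝ)

/-- The tautological (canonical) one-form `Θ_Q` on `T*Q`. -/
def taut : Cot E → Cot E → ℝ := fun z v => z.2 v.1

/-- The canonical symplectic two-form `Ω_Q = -dΘ_Q` on `T*Q`. -/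
def canSymp : Cot E → Cot E → Cot E → ℝ := fun z u v => -(extDer1 taut z u v)
/-- The almost symplectic two-form `Ω_θ = -dΘ_Q + (π_Q*ϑ) ∧ Θ_Q` on `T*Q`,
for the Lee form `θ = π_Q*ϑ`. -/
def lcsForm (ϑ : E → E →L[ℝ] ℝ) : Cot E → Cot E → Cot E → ℝ := fun z u v =>
  canSymp z u v + (ϑ z.1 u.1 * taut z v - ϑ z.1 v.1 * taut z u)

/-- (Hamilton–Jacobi theorem on the locally conformal symplectic
cotangent bundle `T*_θ Q`.)  Here `ϑ` is a closed one-form on `Q = E`,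
`θ = π_Q*ϑ`, `Ω_θ = -dΘ_Q + θ ∧ Θ_Q`, `X_h` satisfies `ι_{X_h}Ω_θ = d_θ h`
(with `d_θ h = dh - h θ`), and `γ` is a one-form on `Q` with `d_ϑ γ = 0`
(so its image is Lagrangian in `(T*Q, Ω_θ)`).  Then `X_h` and
`X_h^γ = Tπ_Q ∘ X_h ∘ γ` are `γ`-related iff `d_ϑ(h ∘ γ) = 0`. -/
theorem hamilton_jacobi_lcs
    [FiniteDimensional ℝ E]
    (ϑ : E → E →L[ℝ] ℝ) (hϑs : ContDiff ℝ (⊤ : ℕ∞) ϑ)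
    (hϑc : ∀ x u v, extDer1 (fun y w => ϑ y w) x u v = 0)
    (h : Cot E → ℝ) (hh : ContDiff ℝ (⊤ : ℕ∞) h)
    (X : Cot E → Cot E)
    (hX : ∀ z v, lcsForm ϑ z (X z) v = fderiv ℝ h z v - h z * ϑ z.1 v.1)
    (γ : E → E →L[ℝ] ℝ) (hγs : ContDiff ℝ (⊤ : ℕ∞) γ)
    (hγlag : ∀ x u v,
      extDer1 (fun y w => γ y w) x u v = ϑ x u * γ x v - ϑ x v * γ x u)
    (Γ : E → Cot E) (hΓ : ∀ q, Γ q = (q, γ q))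
    (Xγ : E → E) (hXγ : ∀ q, Xγ q = (X (Γ q)).1) :
    (∀ q, fderiv ℝ Γ q (Xγ q) = X (Γ q)) ↔
      (∀ q v, fderiv ℝ (fun q' => h (Γ q')) q v - h (Γ q) * ϑ q v = 0) := by
  have hΓ' : Γ = fun q => (q, γ q) := funext hΓ
  subst hΓ'
  have hXγ' : Xγ = fun q => (X (q, γ q)).1 := funext hXγ
  subst hXγ'
  beta_reduce
  have hγd : ∀ q, HasFDerivAt γ (fderiv ℝ γ q) q := fun q =>
    ((hγs.differentiable (by simp)) q).hasFDerivAt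
  have hΓd : ∀ q, HasFDerivAt (fun q : E => ((q, γ q) : Cot E))
      ((ContinuousLinearMap.id ℝ E).prod (fderiv ℝ γ q)) q := fun q =>
    HasFDerivAt.prodMk (hasFDerivAt_id q) (hγd q)
  have hΓfd : ∀ q v, fderiv ℝ (fun q : E => ((q, γ q) : Cot E)) q v
      = (v, fderiv ℝ γ q v) := by
    intro q v
    rw [(hΓd q).fderiv]
    rfl
  have hγapp : ∀ (q : E) (w u : E),
      fderiv ℝ (fun y => γ y w) q u = (fderiv ℝ γ q u) w := by
    intro q w u
    have h1 : HasFDerivAt (fun y => γ y w)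
        ((ContinuousLinearMap.apply ℝ ℝ w).comp (fderiv ℝ γ q)) q :=
      (ContinuousLinearMap.apply ℝ ℝ w).hasFDerivAt.comp q (hγd q)
    rw [h1.fderiv]
    rfl
  have htaut : ∀ (z u v : Cot E),
      fderiv ℝ (fun y : Cot E => taut y v) z u = u.2 v.1 := by
    intro z u v
    have h1 : HasFDerivAt (fun y : Cot E => taut y v)
        ((ContinuousLinearMap.apply ℝ ℝ v.1).comp
          (ContinuousLinearMap.snd ℝ E (E →L[ℝ] ℝ))) z :=
      ((ContinuousLinearMap.apply ℝ ℝ v.1).comp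
          (ContinuousLinearMap.snd ℝ E (E →L[ℝ] ℝ))).hasFDerivAt
    rw [h1.fderiv]
    rfl
  have hlcs : ∀ z u v : Cot E, lcsForm ϑ z u v =
      (v.2 u.1 - u.2 v.1) + (ϑ z.1 u.1 * z.2 v.1 - ϑ z.1 v.1 * z.2 u.1) := by
    intro z u v
    unfold lcsForm canSymp extDer1
    rw [htaut z u v, htaut z v u]
    unfold taut
    ring
  have hlag : ∀ (x : E) (u v : E),
      (fderiv ℝ γ x u) v - (fderiv ℝ γ x v) u = ϑ x u * γ x v - ϑ x v * γ x u := by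
    intro x u v
    have h1 := hγlag x u v
    unfold extDer1 at h1
    rw [hγapp x v u, hγapp x u v] at h1
    exact h1
  have hchain : ∀ (q v : E),
      fderiv ℝ (fun q' => h (q', γ q')) q v
        = fderiv ℝ h (q, γ q) (v, fderiv ℝ γ q v) := by
    intro q v
    have hhd : HasFDerivAt h (fderiv ℝ h (q, γ q)) (q, γ q) :=
      ((hh.differentiable (by simp)) _).hasFDerivAt
    have h1 : HasFDerivAt (fun q' : E => h (q', γ q'))
        ((fderiv ℝ h (q, γ q)).comp
          ((ContinuousLinearMap.id ℝ E).prod (fderiv ℝ γ q))) q :=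
      hhd.comp q (hΓd q)
    rw [h1.fderiv]
    rfl
  have hstar : ∀ (q : E) (v1 : E) (v2 : E →L[ℝ] ℝ),
      v2 (X (q, γ q)).1 - (X (q, γ q)).2 v1
        + (ϑ q (X (q, γ q)).1 * γ q v1 - ϑ q v1 * γ q (X (q, γ q)).1)
        = fderiv ℝ h (q, γ q) (v1, v2) - h (q, γ q) * ϑ q v1 := by
    intro q v1 v2
    have h1 := hX (q, γ q) (v1, v2)
    rw [hlcs] at h1
    exact h1
  constructor
  · intro H q v
    have hb := H q
    rw [hΓfd] at hb
    have hb2 : fderiv ℝ γ q ((X (q, γ q)).1) = (X (q, γ q)).2 :=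
      congrArg Prod.snd hb
    have hs := hstar q v (fderiv ℝ γ q v)
    have hl := hlag q ((X (q, γ q)).1) v
    rw [hchain q v]
    rw [← hb2] at hs
    linarith [hs, hl]
  · intro H q
    rw [hΓfd]
    have h1 : (X (q, γ q)).1 = ((X (q, γ q)).1, fderiv ℝ γ q ((X (q, γ q)).1)).1 := rfl
    refine Prod.ext rfl ?_
    apply ContinuousLinearMap.ext
    intro v
    have hs := hstar q v (fderiv ℝ γ q v)
    have hl := hlag q ((X (q, γ q)).1) v
    have h2 := H q v
    rw [hchain q v] at h2
    show fderiv ℝ γ q ((X (q, γ q)).1) v = (X (q, γ q)).2 v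
    linarith [hs, hl, h2]
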